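/- Every separable infinite-dimensional Banach space Z, viewed as a topological group under addition, admits a free continuous measure-preserving action on a compact metrizable group K with its Haar probability measure; concretely, Z embeds as a topological subgroup of ℝ^ℕ, which is a subgroup of K = (S¹ × S¹)^ℕ, acting on K by left translation. -/
import Mathlib

open MeasureTheory

/-- The embedding `ℝ →+ T²`, `t ↦ (t mod 1, √2·t mod 1)`. -/
noncomputable def emb : ℝ →+ AddCircle (1 : ℝ) × AddCircle (1 : ℝ) :=
  (QuotientAddGroup.mk' (AddSubgroup.zmultiples (1:ℝ))).prod
    ((QuotientAddGroup.mk' (AddSubgroup.zmultiples (1:ℝ))).comp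
      (AddMonoidHom.mulLeft (Real.sqrt 2)))

lemma emb_continuous : Continuous emb := by
  apply Continuous.prodMk
  · exact continuous_quotient_mk'
  · exact continuous_quotient_mk'.comp (continuous_const.mul continuous_id)

lemma emb_eq_zero {t : ℝ} (h : emb t = 0) : t = 0 := by
  have h1 : (t : AddCircle (1:ℝ)) = 0 := congrArg Prod.fst h
  have h2 : ((Real.sqrt 2 * t : ℝ) : AddCircle (1:ℝ)) = 0 := congrArg Prod.snd h
  rw [AddCircle.coe_eq_zero_iff] at h1 h2
  obtain ⟨m, hm⟩ := h1
  obtain ⟨n, hn⟩ := h2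
  simp only [zsmul_eq_mul, mul_one] at hm hn
  by_contra ht
  have hm0 : (m : ℝ) ≠ 0 := by rw [hm]; exact ht
  have h3 : Real.sqrt 2 = (n : ℝ) / (m : ℝ) := by
    field_simp
    rw [hm]; exact hn.symm
  have h4 : Real.sqrt 2 = ((n / m : ℚ) : ℝ) := by push_cast; exact h3
  exact irrational_sqrt_two ⟨(n / m : ℚ), h4.symm⟩

theorem stmt11 {Z : Type*} [NormedAddCommGroup Z] [NormedSpace ℝ Z] [CompleteSpace Z]
    [TopologicalSpace.SeparableSpace Z] (hdim : ¬ FiniteDimensional ℝ Z) :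
    (∃ ψ : Z →+ (ℕ → ℝ), Continuous ψ ∧ Function.Injective ψ) ∧
    ∃ φ : Z →+ (ℕ → AddCircle (1 : ℝ) × AddCircle (1 : ℝ)),
      Continuous φ ∧ Function.Injective φ ∧
      (∀ z : Z, z ≠ 0 → ∀ k : ℕ → AddCircle (1 : ℝ) × AddCircle (1 : ℝ),
        φ z + k ≠ k) ∧
      ∀ η : Measure (ℕ → AddCircle (1 : ℝ) × AddCircle (1 : ℝ)),
        IsProbabilityMeasure η → η.IsAddLeftInvariant →
        ∀ z : Z, MeasurePreserving (fun k => φ z + k) η η := by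
  -- dense sequence
  obtain ⟨u, hu⟩ := TopologicalSpace.exists_dense_seq Z
  -- norming functionals
  choose f hf1 hf2 using fun n => exists_dual_vector'' ℝ (u n)
  -- the embedding into ℝ^ℕ
  let ψ : Z →+ (ℕ → ℝ) :=
    { toFun := fun z n => f n z
      map_zero' := by ext n; simp
      map_add' := by intro a b; ext n; simp }
  have hψc : Continuous ψ := continuous_pi fun n => (f n).continuous
  have hψker : ∀ z : Z, ψ z = 0 → z = 0 := by
    intro z hz
    have key : ∀ ε : ℝ, 0 < ε → ‖z‖ ≤ 2 * ε := by
      intro ε hε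
      obtain ⟨n, hn⟩ := hu.exists_dist_lt z hε
      have hfz : f n z = 0 := congrFun hz n
      have h1 : ‖u n‖ = f n (u n - z) := by
        rw [map_sub, hfz, sub_zero]; exact_mod_cast (hf2 n).symm
      have h2 : ‖u n‖ ≤ ‖u n - z‖ := by
        rw [h1]
        calc f n (u n - z) ≤ |f n (u n - z)| := le_abs_self _
          _ = ‖f n (u n - z)‖ := rfl
          _ ≤ ‖f n‖ * ‖u n - z‖ := (f n).le_opNorm _
          _ ≤ 1 * ‖u n - z‖ := by gcongr; exact hf1 n
          _ = ‖u n - z‖ := one_mul _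
      have h3 : ‖u n - z‖ < ε := by
        rw [← dist_eq_norm, dist_comm]; exact hn
      calc ‖z‖ = ‖(z - u n) + u n‖ := by rw [sub_add_cancel]
        _ ≤ ‖z - u n‖ + ‖u n‖ := norm_add_le _ _
        _ ≤ ‖u n - z‖ + ‖u n - z‖ := by
            rw [norm_sub_rev z (u n)]; exact add_le_add le_rfl h2
        _ ≤ ε + ε := add_le_add h3.le h3.le
        _ = 2 * ε := (two_mul ε).symm
    have : ‖z‖ ≤ 0 := by
      by_contra h
      push_neg at h
      have := key (‖z‖ / 4) (by linarith)
      linarith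
    exact norm_le_zero_iff.mp this
  have hψinj : Function.Injective ψ := by
    intro a b hab
    have : ψ (a - b) = 0 := by rw [map_sub, hab, sub_self]
    exact sub_eq_zero.mp (hψker _ this)
  refine ⟨⟨ψ, hψc, hψinj⟩, ?_⟩
  -- the embedding into (T²)^ℕ
  let φ : Z →+ (ℕ → AddCircle (1:ℝ) × AddCircle (1:ℝ)) :=
    { toFun := fun z n => emb (ψ z n)
      map_zero' := by ext n <;> simp
      map_add' := by
        intro a b; funext n
        show emb (ψ (a+b) n) = emb (ψ a n) + emb (ψ b n)
        rw [map_add, Pi.add_apply, map_add] }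
  have hφc : Continuous φ := continuous_pi fun n =>
    emb_continuous.comp ((continuous_apply n).comp hψc)
  have hφker : ∀ z : Z, φ z = 0 → z = 0 := by
    intro z hz
    apply hψker
    funext n
    exact emb_eq_zero (congrFun hz n)
  have hφinj : Function.Injective φ := by
    intro a b hab
    have : φ (a - b) = 0 := by rw [map_sub, hab, sub_self]
    exact sub_eq_zero.mp (hφker _ this)
  refine ⟨φ, hφc, hφinj, ?_, ?_⟩
  · intro z hz k hk
    apply hz
    apply hφker
    have := add_right_cancel (b := k) (by rw [hk, zero_add] : φ z + k = 0 + k)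
    exact this
  · intro η _ hinv z
    exact measurePreserving_add_left η (φ z)
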